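/- Define G(x̄, λ) := λ e_2 g₀(x̄) + (1-λ) e_2 g₁(x̄) for λ ∈ [0,1], where g₀(x) = max{-x, -(1/2)(x-1)² + 1/2, x - 3/2} and g₁(x) = max{-x + 1/2, -(1/2)(x-1)² + 1/2, x - 2}, and e_2 denotes the Moreau envelope with parameter r = 2. Then at λ = 1/2, the two points x̄₁ = (2-√3)/2 and x̄₃ = (2+√3)/2 satisfy G(x̄₁, 1/2) = G(x̄₃, 1/2) = (2-√3)/2, and both are global minimizers of G(·, 1/2); hence argmin_x G(x, 1/2) is not a singleton. -/
import Mathlib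


noncomputable def g₀ (x : ℝ) : ℝ :=
  max (max (-x) (-(1 / 2) * (x - 1) ^ 2 + 1 / 2)) (x - 3 / 2)

noncomputable def g₁ (x : ℝ) : ℝ :=
  max (max (-x + 1 / 2) (-(1 / 2) * (x - 1) ^ 2 + 1 / 2)) (x - 2)

noncomputable def env2 (f : ℝ → ℝ) (x : ℝ) : ℝ := ⨅ y : ℝ, (f y + (y - x) ^ 2)

noncomputable def G (x lam : ℝ) : ℝ := lam * env2 g₀ x + (1 - lam) * env2 g₁ x

private lemma hs2 : Real.sqrt 3 ^ 2 = 3 := Real.sq_sqrt (by norm_num)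
private lemma hs0 : (0:ℝ) ≤ Real.sqrt 3 := Real.sqrt_nonneg 3
private lemma hsl : (1.7:ℝ) < Real.sqrt 3 := by nlinarith [hs2, hs0]
private lemma hsu : Real.sqrt 3 < 1.8 := by nlinarith [hs2, hs0]

private lemma g0_ge1 (y : ℝ) : -y ≤ g₀ y := le_trans (le_max_left _ _) (le_max_left _ _)
private lemma g0_ge2 (y : ℝ) : -(1/2) * (y - 1)^2 + 1/2 ≤ g₀ y :=
  le_trans (le_max_right _ _) (le_max_left _ _)
private lemma g0_ge3 (y : ℝ) : y - 3/2 ≤ g₀ y := le_max_right _ _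
private lemma g1_ge1 (y : ℝ) : -y + 1/2 ≤ g₁ y := le_trans (le_max_left _ _) (le_max_left _ _)
private lemma g1_ge2 (y : ℝ) : -(1/2) * (y - 1)^2 + 1/2 ≤ g₁ y :=
  le_trans (le_max_right _ _) (le_max_left _ _)
private lemma g1_ge3 (y : ℝ) : y - 2 ≤ g₁ y := le_max_right _ _

private lemma key2 (y z : ℝ) : 2 - Real.sqrt 3 ≤ g₀ y + g₁ z + (y - z)^2 / 2 := by
  have h2 := hs2; have h0 := hs0; have hl := hsl; have hu := hsu
  set s := Real.sqrt 3 with hsdef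
  rcases le_total y 0 with hy | hy
  · rcases le_total z (2 - s) with hz | hz
    · have p := g0_ge1 y; have q := g1_ge1 z
      nlinarith [sq_nonneg (y - z + 2 - s), mul_nonneg (neg_nonneg.2 hy) (by linarith : (0:ℝ) ≤ 3 - s),
        mul_nonneg (by linarith : (0:ℝ) ≤ 2 - s - z) (by linarith : (0:ℝ) ≤ s - 1)]
    · rcases le_total z 2 with hz2 | hz2
      · have p := g0_ge1 y; have q := g1_ge2 z
        nlinarith [mul_nonneg (neg_nonneg.2 hy) (by linarith : (0:ℝ) ≤ 2*z + 2 - y)]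
      · have p := g0_ge1 y; have q := g1_ge3 z
        nlinarith [sq_nonneg (y - z)]
  · rcases le_total y s with hys | hys
    · rcases le_total z (2 - s) with hz | hz
      · have p := g0_ge2 y; have q := g1_ge1 z
        nlinarith [mul_nonneg (by linarith : (0:ℝ) ≤ 2 - s - z) (by linarith : (0:ℝ) ≤ 2*y + s - z),
          mul_nonneg hy (by linarith : (0:ℝ) ≤ s - 1)]
      · rcases le_total z 2 with hz2 | hz2
        · have p := g0_ge2 y; have q := g1_ge2 z
          nlinarith [mul_nonneg (by linarith : (0:ℝ) ≤ s - y) (by linarith : (0:ℝ) ≤ z - 2 + s),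
            mul_nonneg hy (by linarith : (0:ℝ) ≤ 2 - z),
            mul_nonneg (by linarith : (0:ℝ) ≤ s - y) (by linarith : (0:ℝ) ≤ 2 - z),
            mul_nonneg hy (by linarith : (0:ℝ) ≤ z - 2 + s)]
        · have p := g0_ge2 y; have q := g1_ge3 z
          nlinarith [mul_nonneg (by linarith : (0:ℝ) ≤ z - 2) (by linarith : (0:ℝ) ≤ z - 2*y + 4),
            mul_nonneg (by linarith : (0:ℝ) ≤ s - y) (by norm_num : (0:ℝ) ≤ 1)]
    · rcases le_total z (2 - s) with hz | hz
      · have p := g0_ge3 y; have q := g1_ge1 z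
        nlinarith [mul_nonneg (by linarith : (0:ℝ) ≤ y - z - (2*s - 2)) (by linarith : (0:ℝ) ≤ y - z)]
      · rcases le_total z 2 with hz2 | hz2
        · have p := g0_ge3 y; have q := g1_ge2 z
          nlinarith [mul_nonneg (by linarith : (0:ℝ) ≤ y - s) (by linarith : (0:ℝ) ≤ y - 2*z + 2 + s),
            mul_nonneg (by linarith : (0:ℝ) ≤ s - 1) (by linarith : (0:ℝ) ≤ 2 - z)]
        · have p := g0_ge3 y; have q := g1_ge3 z
          nlinarith [mul_nonneg (by linarith : (0:ℝ) ≤ y - s) (by linarith : (0:ℝ) ≤ s - 1),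
            mul_nonneg (by linarith : (0:ℝ) ≤ z - 2) (by linarith : (0:ℝ) ≤ 3 - s),
            sq_nonneg (y - s - z + 2)]

private lemma env2_eq_of (f : ℝ → ℝ) (x v y₀ : ℝ)
    (hlb : ∀ y, v ≤ f y + (y - x)^2) (hpt : f y₀ + (y₀ - x)^2 = v) : env2 f x = v := by
  refine le_antisymm ?_ (le_ciInf hlb)
  have hb : BddBelow (Set.range fun y => f y + (y - x)^2) := ⟨v, by rintro _ ⟨y, rfl⟩; exact hlb y⟩
  calc env2 f x ≤ f y₀ + (y₀ - x)^2 := ciInf_le hb y₀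
    _ = v := hpt

private lemma env01 : env2 g₀ ((2 - Real.sqrt 3) / 2) = ((2 - Real.sqrt 3) / 2)^2 := by
  have h2 := hs2; have h0 := hs0; have hl := hsl; have hu := hsu
  apply env2_eq_of _ _ _ 0
  · intro y
    rcases le_total y 0 with hy | hy
    · have p := g0_ge1 y
      nlinarith [mul_nonneg (neg_nonneg.2 hy) (by linarith : (0:ℝ) ≤ 3 - Real.sqrt 3 - y)]
    · have p := g0_ge2 y
      nlinarith [mul_nonneg hy (by linarith : (0:ℝ) ≤ y/2 + Real.sqrt 3 - 1)]
  · have : g₀ 0 = 0 := by unfold g₀; norm_num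
    rw [this]; ring

private lemma env11 : env2 g₁ ((2 - Real.sqrt 3) / 2) = 1/4 := by
  have h2 := hs2; have h0 := hs0; have hl := hsl; have hu := hsu
  apply env2_eq_of _ _ _ (2 - Real.sqrt 3)
  · intro z
    rcases le_total z (2 - Real.sqrt 3) with hz | hz
    · have p := g1_ge1 z
      nlinarith [mul_nonneg (by linarith : (0:ℝ) ≤ 1 - z) (by linarith : (0:ℝ) ≤ 2 - Real.sqrt 3 - z)]
    · have p := g1_ge2 z
      nlinarith [mul_nonneg (by linarith : (0:ℝ) ≤ z - (2 - Real.sqrt 3)) (by linarith : (0:ℝ) ≤ z + Real.sqrt 3)]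
  · have : g₁ (2 - Real.sqrt 3) = Real.sqrt 3 - 3/2 := by
      apply le_antisymm
      · unfold g₁
        apply max_le (max_le ?_ ?_) ?_ <;> nlinarith [hs2, hsl, hsu]
      · have := g1_ge1 (2 - Real.sqrt 3); linarith
    rw [this]; nlinarith [hs2]

private lemma env03 : env2 g₀ ((2 + Real.sqrt 3) / 2) = 1/4 := by
  have h2 := hs2; have h0 := hs0; have hl := hsl; have hu := hsu
  apply env2_eq_of _ _ _ (Real.sqrt 3)
  · intro y
    rcases le_total y (Real.sqrt 3) with hy | hy
    · have p := g0_ge2 y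
      nlinarith [mul_nonneg (by linarith : (0:ℝ) ≤ Real.sqrt 3 - y) (by linarith : (0:ℝ) ≤ Real.sqrt 3 + 2 - y)]
    · have p := g0_ge3 y
      nlinarith [mul_nonneg (by linarith : (0:ℝ) ≤ y - 1) (by linarith : (0:ℝ) ≤ y - Real.sqrt 3)]
  · have : g₀ (Real.sqrt 3) = Real.sqrt 3 - 3/2 := by
      apply le_antisymm
      · unfold g₀
        apply max_le (max_le ?_ ?_) ?_ <;> nlinarith [hs2, hsl, hsu]
      · have := g0_ge3 (Real.sqrt 3); linarith
    rw [this]; nlinarith [hs2]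

private lemma env13 : env2 g₁ ((2 + Real.sqrt 3) / 2) = ((2 - Real.sqrt 3) / 2)^2 := by
  have h2 := hs2; have h0 := hs0; have hl := hsl; have hu := hsu
  apply env2_eq_of _ _ _ 2
  · intro z
    rcases le_total z 2 with hz | hz
    · have p := g1_ge2 z
      nlinarith [mul_nonneg (by linarith : (0:ℝ) ≤ 2 - z) (by linarith : (0:ℝ) ≤ 2*Real.sqrt 3 - z)]
    · have p := g1_ge3 z
      nlinarith [sq_nonneg (2*z - Real.sqrt 3)]
  · have : g₁ 2 = 0 := by unfold g₁; norm_num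
    rw [this]; ring

private lemma Gmin (x : ℝ) : (2 - Real.sqrt 3) / 2 ≤ G x (1/2) := by
  have h1 : ∀ y : ℝ, 2 - Real.sqrt 3 - (g₀ y + (y - x)^2) ≤ env2 g₁ x := by
    intro y
    apply le_ciInf
    intro z
    nlinarith [key2 y z, sq_nonneg (y + z - 2*x)]
  have h2 : 2 - Real.sqrt 3 - env2 g₁ x ≤ env2 g₀ x :=
    le_ciInf fun y => by linarith [h1 y]
  unfold G
  norm_num
  linarith

theorem two_minimizers_at_half :
    G ((2 - Real.sqrt 3) / 2) (1 / 2) = (2 - Real.sqrt 3) / 2 ∧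
    G ((2 + Real.sqrt 3) / 2) (1 / 2) = (2 - Real.sqrt 3) / 2 ∧
    (∀ x : ℝ, G ((2 - Real.sqrt 3) / 2) (1 / 2) ≤ G x (1 / 2)) ∧
    (∀ x : ℝ, G ((2 + Real.sqrt 3) / 2) (1 / 2) ≤ G x (1 / 2)) ∧
    ¬ (Set.Subsingleton {x : ℝ | ∀ z : ℝ, G x (1 / 2) ≤ G z (1 / 2)}) := by
  have hv1 : G ((2 - Real.sqrt 3) / 2) (1 / 2) = (2 - Real.sqrt 3) / 2 := by
    unfold G
    rw [env01, env11]
    linear_combination hs2 / 8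
  have hv3 : G ((2 + Real.sqrt 3) / 2) (1 / 2) = (2 - Real.sqrt 3) / 2 := by
    unfold G
    rw [env03, env13]
    linear_combination hs2 / 8
  refine ⟨hv1, hv3, ?_, ?_, ?_⟩
  · intro x; rw [hv1]; exact Gmin x
  · intro x; rw [hv3]; exact Gmin x
  · intro hsub
    have h1 : (2 - Real.sqrt 3) / 2 ∈ {x : ℝ | ∀ z : ℝ, G x (1 / 2) ≤ G z (1 / 2)} := by
      intro z; rw [hv1]; exact Gmin z
    have h3 : (2 + Real.sqrt 3) / 2 ∈ {x : ℝ | ∀ z : ℝ, G x (1 / 2) ≤ G z (1 / 2)} := by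
      intro z; rw [hv3]; exact Gmin z
    have := hsub h1 h3
    have := hsl
    nlinarith
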